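/- For each i∈I, every element a of U_q^-(g) can be written uniquely as a finite sum a = Σ_{n≥0} f_i^{(n)} a_n where a_n∈U_q^-(g), e_i' a_n = 0 for all n, and a_n = 0 for all but finitely many n. -/

import Mathlib

noncomputable section
open scoped BigOperators

abbrev KK : Type := RatFunc ℚ

def qq : KK := RatFunc.X

def qZ (n : ℤ) : KK := qq ^ n

def qInt (d : ℤ) (k : ℕ) : KK := (qq ^ (d * k) - qq ^ (-(d * k : ℤ))) / (qq ^ d - qq ^ (-d : ℤ))

def qFact (d : ℤ) (k : ℕ) : KK := ∏ m ∈ Finset.range k, qInt d (m + 1)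

variable {I : Type} [DecidableEq I]

/-- `b = 1 - (α_i^∨, α_j)` -/
def serreN (A : I → I → ℤ) (i j : I) : ℕ := (1 - 2 * A i j / A i i).toNat

def fSerre (A : I → I → ℤ) (i j : I) : FreeAlgebra KK I :=
  ∑ k ∈ Finset.range (serreN A i j + 1),
    ((-1 : KK) ^ k * (qFact (A i i / 2) k)⁻¹ * (qFact (A i i / 2) (serreN A i j - k))⁻¹) •
      ((FreeAlgebra.ι KK i) ^ k * FreeAlgebra.ι KK j * (FreeAlgebra.ι KK i) ^ (serreN A i j - k))

inductive SerreRel (A : I → I → ℤ) : FreeAlgebra KK I → FreeAlgebra KK I → Prop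
  | serre (i j : I) (h : i ≠ j) : SerreRel A (fSerre A i j) 0

abbrev Um (A : I → I → ℤ) : Type := RingQuot (SerreRel A)

def fgen (A : I → I → ℤ) (i : I) : Um A := RingQuot.mkAlgHom KK (SerreRel A) (FreeAlgebra.ι KK i)

def IsWt (A : I → I → ℤ) (ν : I →₀ ℕ) (a : Um A) : Prop :=
  a ∈ Submodule.span KK {x | ∃ L : List I, (∀ i, L.count i = ν i) ∧ x = (L.map (fgen A)).prod}

def IsCartan (A : I → I → ℤ) : Prop :=
  (∀ i j, A i j = A j i) ∧ (∀ i, 0 < A i i) ∧ (∀ i, 2 ∣ A i i) ∧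
  (∀ i j, i ≠ j → A i j ≤ 0) ∧ (∀ i j, A i i ∣ 2 * A i j)

def EprimRel (A : I → I → ℤ) (E : I → Module.End KK (Um A)) : Prop :=
  (∀ i, E i 1 = 0) ∧
  ∀ i j (a : Um A), E i (fgen A j * a) =
    (if i = j then a else 0) + qZ (-(A i j)) • (fgen A j * (E i a))

def fdiv (A : I → I → ℤ) (i : I) (n : ℕ) : Um A :=
  (qFact (A i i / 2) n)⁻¹ • (fgen A i) ^ n


set_option linter.unusedSectionVars false
set_option linter.unnecessarySimpa false

/-! ### Facts about the field `KK = RatFunc ℚ` -/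

lemma qq_ne_zero : qq ≠ 0 := RatFunc.X_ne_zero

lemma qq_pow_ne_one {m : ℕ} (hm : 0 < m) : qq ^ m ≠ 1 := by
  rw [qq, ← RatFunc.algebraMap_X (K := ℚ), ← map_pow, ← map_one (algebraMap (Polynomial ℚ) KK)]
  intro h
  have := RatFunc.algebraMap_injective ℚ h
  have h2 : (Polynomial.X : Polynomial ℚ) ^ m ≠ 1 := by
    intro hx
    have := congrArg Polynomial.natDegree hx
    simp [Polynomial.natDegree_X_pow] at this
    omega
  exact h2 this

lemma qZ_eq_one_iff {n : ℤ} : qZ n = 1 ↔ n = 0 := by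
  constructor
  · intro h
    rcases lt_trichotomy n 0 with hn | hn | hn
    · exfalso
      rw [qZ, (by omega : n = -(((-n).toNat : ℕ) : ℤ)) ] at h
      rw [zpow_neg, zpow_natCast, inv_eq_one] at h
      exact qq_pow_ne_one (by omega) h
    · exact hn
    · exfalso
      rw [qZ, (by omega : n = (n.toNat : ℤ)), zpow_natCast] at h
      exact qq_pow_ne_one (by omega) h
  · intro h; simp [h, qZ]

lemma qZ_ne_zero (n : ℤ) : qZ n ≠ 0 := zpow_ne_zero _ qq_ne_zero

lemma qZ_add (a b : ℤ) : qZ (a + b) = qZ a * qZ b := zpow_add₀ qq_ne_zero a b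

lemma qZ_sub_ne_zero {a b : ℤ} (h : a ≠ b) : qZ a - qZ b ≠ 0 := by
  rw [sub_ne_zero]
  intro hh
  have : qZ (a - b) = 1 := by
    rw [sub_eq_add_neg, qZ_add, hh]
    rw [← qZ_add]
    simp [qZ_eq_one_iff]
  rw [qZ_eq_one_iff] at this
  omega

lemma qInt_ne_zero {d : ℤ} (hd : 0 < d) {k : ℕ} (hk : 0 < k) : qInt d k ≠ 0 := by
  have hdk : (0:ℤ) < d * k := by positivity
  have h1 : qZ (d * k) - qZ (-(d * k)) ≠ 0 := qZ_sub_ne_zero (by omega)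
  have h2 : qZ d - qZ (-d) ≠ 0 := qZ_sub_ne_zero (by omega)
  exact div_ne_zero h1 h2

lemma qFact_ne_zero {d : ℤ} (hd : 0 < d) (k : ℕ) : qFact d k ≠ 0 := by
  apply Finset.prod_ne_zero_iff.mpr
  intro m _
  exact qInt_ne_zero hd (Nat.succ_pos m)

def sP (d : ℤ) (n : ℕ) : KK := ∑ k ∈ Finset.range n, qZ (-d) ^ k

lemma sP_ne_zero {d : ℤ} (hd : 0 < d) {n : ℕ} (hn : 0 < n) : sP d n ≠ 0 := by
  have hx : qZ (-d) ≠ 1 := by rw [Ne, qZ_eq_one_iff]; omega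
  rw [sP, geom_sum_eq hx]
  apply div_ne_zero _ (sub_ne_zero.mpr hx)
  rw [sub_ne_zero]
  have : qZ (-d) ^ n = qZ (-d * n) := by
    rw [← zpow_natCast (qZ (-d)) n, qZ, ← zpow_mul]
    rfl
  rw [this, Ne, qZ_eq_one_iff]
  have h3 : (0:ℤ) < d * n := by positivity
  intro h4
  rw [show -d * (n:ℤ) = -(d*n) by ring] at h4
  omega

lemma sP_succ (d : ℤ) (n : ℕ) : sP d (n + 2) = 1 + qZ (-d) * sP d (n + 1) := by
  rw [sP, geom_sum_succ, sP]
  ring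

def lam (d : ℤ) (n : ℕ) : KK := sP d n * (qInt (d / 2) n)⁻¹

lemma lam_ne_zero {d : ℤ} (hd : 0 < d) (h2 : 2 ∣ d) {n : ℕ} (hn : 0 < n) : lam d n ≠ 0 := by
  have hd2 : 0 < d / 2 := by omega
  exact mul_ne_zero (sP_ne_zero hd hn) (inv_ne_zero (qInt_ne_zero hd2 hn))

lemma prod_lam_ne_zero {d : ℤ} (hd : 0 < d) (h2d : 2 ∣ d) (N : ℕ) :
    (∏ j ∈ Finset.range N, lam d (j + 1)) ≠ 0 :=
  Finset.prod_ne_zero_iff.mpr fun j _ => lam_ne_zero hd h2d j.succ_pos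

/-! ### Filtration of `Um A` by lengths of monomials, local nilpotency of `E i` -/

def Vf (A : I → I → ℤ) (n : ℕ) : Submodule KK (Um A) :=
  Submodule.span KK {x | ∃ L : List I, L.length ≤ n ∧ x = (L.map (fgen A)).prod}

lemma mon_mem {A : I → I → ℤ} {L : List I} {n : ℕ} (h : L.length ≤ n) :
    (L.map (fgen A)).prod ∈ Vf A n :=
  Submodule.subset_span ⟨L, h, rfl⟩

lemma fgen_mul_mem {A : I → I → ℤ} (j : I) {n : ℕ} {v : Um A} (hv : v ∈ Vf A n) :
    fgen A j * v ∈ Vf A (n + 1) := by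
  induction hv using Submodule.span_induction with
  | mem x hx =>
      obtain ⟨L, hL, rfl⟩ := hx
      exact mon_mem (L := j :: L) (by simpa using Nat.succ_le_succ hL)
  | zero => simpa using (Vf A (n+1)).zero_mem
  | add x y _ _ hx hy => rw [mul_add]; exact (Vf A (n+1)).add_mem hx hy
  | smul c x _ hx => rw [mul_smul_comm]; exact (Vf A (n+1)).smul_mem c hx

lemma Vf_mul_mem {A : I → I → ℤ} {m n : ℕ} {u v : Um A} (hu : u ∈ Vf A m) (hv : v ∈ Vf A n) :
    u * v ∈ Vf A (m + n) := by
  induction hu using Submodule.span_induction with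
  | mem x hx =>
      obtain ⟨L, hL, rfl⟩ := hx
      induction hv using Submodule.span_induction with
      | mem y hy =>
          obtain ⟨L', hL', rfl⟩ := hy
          have := mon_mem (A := A) (L := L ++ L') (n := m + n) (by simp; omega)
          simpa using this
      | zero => simpa using (Vf A (m+n)).zero_mem
      | add a b _ _ ha hb => rw [mul_add]; exact (Vf A (m+n)).add_mem ha hb
      | smul c a _ ha => rw [mul_smul_comm]; exact (Vf A (m+n)).smul_mem c ha
  | zero => simpa using (Vf A (m+n)).zero_mem
  | add a b _ _ ha hb => rw [add_mul]; exact (Vf A (m+n)).add_mem ha hb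
  | smul c a _ ha => rw [smul_mul_assoc]; exact (Vf A (m+n)).smul_mem c ha

lemma top_eq_iSup_Vf (A : I → I → ℤ) (a : Um A) : ∃ n, a ∈ Vf A n := by
  have hsurj := RingQuot.mkAlgHom_surjective KK (SerreRel A)
  obtain ⟨y, rfl⟩ := hsurj a
  induction y using FreeAlgebra.induction with
  | grade0 c =>
      refine ⟨0, ?_⟩
      rw [AlgHom.commutes]
      have h1 : ((List.map (fgen A) []).prod : Um A) ∈ Vf A 0 := mon_mem (by simp)
      simp only [List.map_nil, List.prod_nil] at h1
      rw [Algebra.algebraMap_eq_smul_one]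
      exact (Vf A 0).smul_mem c h1
  | grade1 i =>
      refine ⟨1, ?_⟩
      simpa [fgen] using mon_mem (A := A) (L := [i]) (n := 1) (by simp)
  | mul x y hx hy =>
      obtain ⟨m, hm⟩ := hx; obtain ⟨n, hn⟩ := hy
      refine ⟨m + n, ?_⟩
      rw [map_mul]
      exact Vf_mul_mem hm hn
  | add x y hx hy =>
      obtain ⟨m, hm⟩ := hx; obtain ⟨n, hn⟩ := hy
      refine ⟨m + n, ?_⟩
      rw [map_add]
      have h1 : Vf A m ≤ Vf A (m+n) := Submodule.span_mono (fun x ⟨L,hL,hx⟩ => ⟨L, by omega, hx⟩)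
      have h2 : Vf A n ≤ Vf A (m+n) := Submodule.span_mono (fun x ⟨L,hL,hx⟩ => ⟨L, by omega, hx⟩)
      exact (Vf A (m+n)).add_mem (h1 hm) (h2 hn)

lemma E_Vf_zero {A : I → I → ℤ} {E : I → Module.End KK (Um A)} (hE : EprimRel A E)
    (i : I) {v : Um A} (hv : v ∈ Vf A 0) : E i v = 0 := by
  have : Vf A 0 ≤ LinearMap.ker (E i) := by
    rw [Vf, Submodule.span_le]
    rintro x ⟨L, hL, rfl⟩
    rw [List.length_eq_zero_iff.mp (Nat.le_zero.mp hL)]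
    simpa using hE.1 i
  exact this hv

lemma E_Vf_succ {A : I → I → ℤ} {E : I → Module.End KK (Um A)} (hE : EprimRel A E)
    (i : I) : ∀ n : ℕ, ∀ v ∈ Vf A (n + 1), E i v ∈ Vf A n := by
  intro n
  induction n with
  | zero =>
      intro v hv
      induction hv using Submodule.span_induction with
      | mem x hx =>
          obtain ⟨L, hL, rfl⟩ := hx
          match L with
          | [] =>
              simp only [List.map_nil, List.prod_nil]
              rw [hE.1 i]; exact (Vf A 0).zero_mem
          | j :: L' =>
              have hL' : L' = [] := List.length_eq_zero_iff.mp (by simpa using hL)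
              subst hL'
              simp only [List.map_cons, List.map_nil, List.prod_cons, List.prod_nil, mul_one]
              have : fgen A j = fgen A j * 1 := (mul_one _).symm
              rw [this, hE.2 i j 1, hE.1 i, mul_zero, smul_zero, add_zero]
              split
              · exact mon_mem (L := []) (by simp)
              · exact (Vf A 0).zero_mem
      | zero => simpa using (Vf A 0).zero_mem
      | add a b _ _ ha hb => rw [map_add]; exact (Vf A 0).add_mem ha hb
      | smul c a _ ha => rw [map_smul]; exact (Vf A 0).smul_mem c ha
  | succ n ih =>
      intro v hv
      induction hv using Submodule.span_induction with
      | mem x hx =>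
          obtain ⟨L, hL, rfl⟩ := hx
          match L with
          | [] => simp only [List.map_nil, List.prod_nil]; rw [hE.1 i]; exact (Vf A _).zero_mem
          | j :: L' =>
              simp only [List.map_cons, List.prod_cons]
              rw [hE.2 i j]
              have hmem : (L'.map (fgen A)).prod ∈ Vf A (n+1) := mon_mem (by simpa using hL)
              apply (Vf A (n+1)).add_mem
              · split
                · exact hmem
                · exact (Vf A _).zero_mem
              · exact (Vf A (n+1)).smul_mem _ (fgen_mul_mem j (ih _ hmem))
      | zero => simpa using (Vf A _).zero_mem
      | add a b _ _ ha hb => rw [map_add]; exact (Vf A _).add_mem ha hb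
      | smul c a _ ha => rw [map_smul]; exact (Vf A _).smul_mem c ha

lemma E_nilpotent {A : I → I → ℤ} {E : I → Module.End KK (Um A)} (hE : EprimRel A E)
    (i : I) : ∀ n : ℕ, ∀ v ∈ Vf A n, (E i ^ (n + 1)) v = 0 := by
  intro n
  induction n with
  | zero => intro v hv; rw [pow_one]; exact E_Vf_zero hE i hv
  | succ n ih =>
      intro v hv
      rw [pow_succ, Module.End.mul_apply]
      exact ih _ (E_Vf_succ hE i n v hv)

/-! ### q-boson computations -/

section boson
variable {A : I → I → ℤ} {E : I → Module.End KK (Um A)}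

lemma Estep (hE : EprimRel A E) (i : I) {a : Um A} (ha : E i a = 0) :
    ∀ n : ℕ, E i (fgen A i ^ (n + 1) * a) = sP (A i i) (n + 1) • (fgen A i ^ n * a) := by
  intro n
  induction n with
  | zero =>
      rw [pow_one, hE.2 i i a, if_pos rfl, ha, mul_zero, smul_zero, add_zero]
      simp [sP]
  | succ n ih =>
      rw [pow_succ' (fgen A i) (n+1), mul_assoc, hE.2 i i, if_pos rfl, ih,
        mul_smul_comm, smul_smul, ← mul_assoc, ← pow_succ' (fgen A i) n]
      rw [show n + 1 + 1 = n + 2 from rfl, sP_succ, add_smul, one_smul]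

lemma E_fdiv (hE : EprimRel A E) (i : I) (hd : 0 < A i i) (h2d : 2 ∣ A i i)
    {a : Um A} (ha : E i a = 0) (n : ℕ) :
    E i (fdiv A i (n + 1) * a) = lam (A i i) (n + 1) • (fdiv A i n * a) := by
  have hd2 : 0 < A i i / 2 := by omega
  rw [fdiv, fdiv, smul_mul_assoc, smul_mul_assoc, map_smul, Estep hE i ha n, smul_smul, smul_smul]
  congr 1
  rw [lam]
  have hfact : qFact (A i i / 2) (n + 1) = qFact (A i i / 2) n * qInt (A i i / 2) (n + 1) :=
    Finset.prod_range_succ _ n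
  rw [hfact]
  field_simp

lemma fdiv_zero_mul (A : I → I → ℤ) (i : I) (a : Um A) : fdiv A i 0 * a = a := by
  simp [fdiv, qFact]

lemma E_pow_fdiv_self (hE : EprimRel A E) (i : I) (hd : 0 < A i i) (h2d : 2 ∣ A i i)
    {a : Um A} (ha : E i a = 0) :
    ∀ n : ℕ, (E i ^ n) (fdiv A i n * a) = (∏ j ∈ Finset.range n, lam (A i i) (j + 1)) • a := by
  intro n
  induction n with
  | zero => simp [fdiv_zero_mul]
  | succ n ih =>
      rw [pow_succ, Module.End.mul_apply, E_fdiv hE i hd h2d ha n, map_smul, ih,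
        smul_smul, Finset.prod_range_succ, mul_comm]

lemma E_pow_fdiv_top (hE : EprimRel A E) (i : I) (hd : 0 < A i i) (h2d : 2 ∣ A i i)
    {a : Um A} (ha : E i a = 0) (n : ℕ) :
    (E i ^ (n + 1)) (fdiv A i n * a) = 0 := by
  rw [pow_succ', Module.End.mul_apply, E_pow_fdiv_self hE i hd h2d ha n, map_smul, ha, smul_zero]

lemma E_pow_fdiv_gt (hE : EprimRel A E) (i : I) (hd : 0 < A i i) (h2d : 2 ∣ A i i)
    {a : Um A} (ha : E i a = 0) {n N : ℕ} (h : n < N) :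
    (E i ^ N) (fdiv A i n * a) = 0 := by
  rw [show N = (N - n - 1) + (n + 1) by omega, pow_add, Module.End.mul_apply,
    E_pow_fdiv_top hE i hd h2d ha n, map_zero]

lemma rep_zero (hE : EprimRel A E) (i : I) (hd : 0 < A i i) (h2d : 2 ∣ A i i) :
    ∀ N : ℕ, ∀ b : ℕ →₀ Um A, b.support ⊆ Finset.range N → (∀ n, E i (b n) = 0) →
      (b.sum fun n x => fdiv A i n * x) = 0 → b = 0 := by
  intro N
  induction N with
  | zero =>
      intro b hsupp _ _
      rw [Finset.range_zero, Finset.subset_empty] at hsupp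
      exact Finsupp.support_eq_empty.mp hsupp
  | succ N ih =>
      intro b hsupp hker hsum
      have hbN : b N = 0 := by
        have h1 : (E i ^ N) (b.sum fun n x => fdiv A i n * x) = 0 := by rw [hsum]; simp
        rw [map_finsuppSum] at h1
        have h2 : (b.sum fun n x => (E i ^ N) (fdiv A i n * x))
            = (∏ j ∈ Finset.range N, lam (A i i) (j + 1)) • b N := by
          rw [Finsupp.sum, Finset.sum_eq_single N]
          · exact E_pow_fdiv_self hE i hd h2d (hker N) N
          · intro n hn hne
            have hlt : n < N := by
              have := hsupp hn
              simp only [Finset.mem_range] at this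
              omega
            exact E_pow_fdiv_gt hE i hd h2d (hker n) hlt
          · intro hN
            rw [Finsupp.notMem_support_iff.mp hN, mul_zero, map_zero]
        rw [h2] at h1
        exact (smul_eq_zero.mp h1).resolve_left (prod_lam_ne_zero hd h2d N)
      have hsupp' : b.support ⊆ Finset.range N := by
        intro n hn
        have h3 := hsupp hn
        simp only [Finset.mem_range] at h3 ⊢
        have h4 : n ≠ N := fun h => (Finsupp.mem_support_iff.mp hn) (h ▸ hbN)
        omega
      exact ih b hsupp' hker hsum

lemma rep_exists (hE : EprimRel A E) (i : I) (hd : 0 < A i i) (h2d : 2 ∣ A i i) :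
    ∀ m : ℕ, ∀ v : Um A, (E i ^ m) v = 0 →
      ∃ c : ℕ →₀ Um A, (∀ n, E i (c n) = 0) ∧ v = c.sum fun n x => fdiv A i n * x := by
  intro m
  induction m with
  | zero =>
      intro v hv
      rw [pow_zero, Module.End.one_apply] at hv
      exact ⟨0, by simp, by simp [hv]⟩
  | succ m ih =>
      intro v hv
      rw [pow_succ, Module.End.mul_apply] at hv
      obtain ⟨c, hker, hsum⟩ := ih (E i v) hv
      set w : Um A := c.sum fun n x => fdiv A i (n+1) * ((lam (A i i) (n+1))⁻¹ • x) with hw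
      have hEw : E i w = E i v := by
        rw [hw, map_finsuppSum, hsum]
        apply Finsupp.sum_congr
        intro n _
        rw [mul_smul_comm, map_smul, E_fdiv hE i hd h2d (hker n) n, smul_smul,
          inv_mul_cancel₀ (lam_ne_zero hd h2d n.succ_pos), one_smul]
      classical
      set g : ℕ → Um A := fun k => Nat.rec (v - w) (fun n _ => (lam (A i i) (n+1))⁻¹ • c n) k with hg
      have hgsupp : ∀ k : ℕ, g k ≠ 0 → k ∈ insert 0 (c.support.image Nat.succ) := by
        intro k hk
        match k with
        | 0 => exact Finset.mem_insert_self _ _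
        | n + 1 =>
            apply Finset.mem_insert_of_mem
            apply Finset.mem_image_of_mem
            rw [Finsupp.mem_support_iff]
            intro h0
            apply hk
            show (lam (A i i) (n+1))⁻¹ • c n = 0
            rw [h0, smul_zero]
      refine ⟨Finsupp.onFinset _ g hgsupp, ?_, ?_⟩
      · intro n
        match n with
        | 0 =>
            show E i (v - w) = 0
            rw [map_sub, hEw, sub_self]
        | n + 1 =>
            show E i ((lam (A i i) (n+1))⁻¹ • c n) = 0
            rw [map_smul, hker n, smul_zero]
      · rw [Finsupp.sum_of_support_subset _ Finsupp.support_onFinset_subset _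
          (fun k _ => by rw [mul_zero])]
        have h0notmem : (0 : ℕ) ∉ c.support.image Nat.succ := by
          simp
        rw [Finset.sum_insert h0notmem]
        have himg : ∑ k ∈ c.support.image Nat.succ, fdiv A i k * (Finsupp.onFinset _ g hgsupp) k
            = ∑ n ∈ c.support, fdiv A i (n+1) * ((lam (A i i) (n+1))⁻¹ • c n) := by
          rw [Finset.sum_image (fun a _ b _ h => Nat.succ_injective h)]
          rfl
        rw [himg]
        show v = fdiv A i 0 * (v - w) + _
        rw [fdiv_zero_mul]
        have : ∑ n ∈ c.support, fdiv A i (n+1) * ((lam (A i i) (n+1))⁻¹ • c n) = w := rfl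
        rw [this, sub_add_cancel]

end boson

theorem stmt3 (A : I → I → ℤ) (hA : IsCartan A)
    (E : I → Module.End KK (Um A)) (hE : EprimRel A E) :
    ∀ (i : I) (a : Um A),
      ∃! c : ℕ →₀ Um A,
        (∀ n : ℕ, E i (c n) = 0) ∧ a = c.sum fun n x => fdiv A i n * x := by
  intro i a
  obtain ⟨hsym, hpos, hdvd, hneg, hdvd2⟩ := hA
  have hd := hpos i
  have h2d := hdvd i
  obtain ⟨N, hN⟩ := top_eq_iSup_Vf A a
  obtain ⟨c, hker, hsum⟩ := rep_exists hE i hd h2d (N + 1) a (E_nilpotent hE i N a hN)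
  refine ⟨c, ⟨hker, hsum⟩, ?_⟩
  rintro c₁ ⟨hk1, hs1⟩
  have hsub : c₁ - c = 0 := by
    apply rep_zero hE i hd h2d (((c₁.support ∪ c.support).sup id) + 1)
    · intro n hn
      have h5 := Finsupp.support_sub hn
      have h6 : n ≤ (c₁.support ∪ c.support).sup id := Finset.le_sup (f := id) h5
      simp only [Finset.mem_range]
      omega
    · intro n
      rw [Finsupp.sub_apply, map_sub, hk1 n, hker n, sub_self]
    · rw [Finsupp.sum_sub_index (fun a b₁ b₂ => mul_sub _ _ _), ← hs1, ← hsum, sub_self]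
  exact sub_eq_zero.mp hsub
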